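/- Let (X, 𝒯, ≤, d) be a spacetime (closed preordered space with upper semi-continuous d vanishing outside ≤ and satisfying the reverse triangle inequality). Define on X × ℝ with the product topology the relation (x,a) ≤↓ (y,b) iff x ≤ y and b ≤ a + d(x,y). Then ≤↓ is a preorder whose graph is closed in the product topology of (X × ℝ)². -/

import Mathlib

open scoped ENNReal

theorem stmt4 {X : Type*} [TopologicalSpace X] (le : X → X → Prop)
    (hrefl : ∀ x, le x x) (htrans : ∀ x y z, le x y → le y z → le x z)
    (hclosed : IsClosed {p : X × X | le p.1 p.2})
    (d : X → X → ℝ≥0∞)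
    (husc : UpperSemicontinuous (fun p : X × X => d p.1 p.2))
    (hvanish : ∀ x y, ¬ le x y → d x y = 0)
    (hrev : ∀ x y z, le x y → le y z → d x y + d y z ≤ d x z)
    (R : X × ℝ → X × ℝ → Prop)
    (hR : ∀ P Q : X × ℝ, R P Q ↔ le P.1 Q.1 ∧ (Q.2 : EReal) ≤ (P.2 : EReal) + (d P.1 Q.1 : EReal)) :
    (∀ P, R P P) ∧ (∀ P Q S, R P Q → R Q S → R P S) ∧
    IsClosed {p : (X × ℝ) × (X × ℝ) | R p.1 p.2} := by
  refine ⟨?_, ?_, ?_⟩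
  · intro P
    rw [hR]
    refine ⟨hrefl _, ?_⟩
    calc (P.2 : EReal) = (P.2 : EReal) + 0 := by rw [add_zero]
    _ ≤ (P.2 : EReal) + (d P.1 P.1 : EReal) :=
      add_le_add le_rfl (EReal.coe_ennreal_nonneg _)
  · intro P Q S hPQ hQS
    rw [hR] at hPQ hQS ⊢
    obtain ⟨h1, h2⟩ := hPQ
    obtain ⟨h3, h4⟩ := hQS
    refine ⟨htrans _ _ _ h1 h3, ?_⟩
    calc (S.2 : EReal) ≤ (Q.2 : EReal) + (d Q.1 S.1 : EReal) := h4
    _ ≤ ((P.2 : EReal) + (d P.1 Q.1 : EReal)) + (d Q.1 S.1 : EReal) :=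
      add_le_add h2 le_rfl
    _ = (P.2 : EReal) + ((d P.1 Q.1 : EReal) + (d Q.1 S.1 : EReal)) := add_assoc _ _ _
    _ = (P.2 : EReal) + ((d P.1 Q.1 + d Q.1 S.1 : ℝ≥0∞) : EReal) := by
      rw [EReal.coe_ennreal_add]
    _ ≤ (P.2 : EReal) + (d P.1 S.1 : EReal) :=
      add_le_add le_rfl (EReal.coe_ennreal_le_coe_ennreal_iff.2 (hrev _ _ _ h1 h3))
  · have hset : {p : (X × ℝ) × (X × ℝ) | R p.1 p.2} =
        {p : (X × ℝ) × (X × ℝ) | le p.1.1 p.2.1} ∩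
        {p : (X × ℝ) × (X × ℝ) |
          (p.2.2 : EReal) ≤ (p.1.2 : EReal) + (d p.1.1 p.2.1 : EReal)} := by
      ext p; simp [hR, Set.mem_setOf_eq]
    rw [hset]
    refine IsClosed.inter ?_ ?_
    · have hc : Continuous (fun p : (X × ℝ) × (X × ℝ) => (p.1.1, p.2.1)) :=
        (continuous_fst.fst).prodMk (continuous_snd.fst)
      exact hclosed.preimage hc
    · set f : (X × ℝ) × (X × ℝ) → EReal :=
        fun p => (p.1.2 : EReal) + (d p.1.1 p.2.1 : EReal) with hf_def
      set g : (X × ℝ) × (X × ℝ) → EReal := fun p => (p.2.2 : EReal) with hg_def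
      have hfusc : UpperSemicontinuous f := by
        have h1 : UpperSemicontinuous (fun p : (X × ℝ) × (X × ℝ) => (p.1.2 : EReal)) :=
          (continuous_coe_real_ereal.comp (continuous_fst.snd)).upperSemicontinuous
        have h2 : UpperSemicontinuous
            (fun p : (X × ℝ) × (X × ℝ) => (d p.1.1 p.2.1 : EReal)) := by
          have hc : Continuous (fun p : (X × ℝ) × (X × ℝ) => (p.1.1, p.2.1)) :=
            (continuous_fst.fst).prodMk (continuous_snd.fst)
          have husc2 : UpperSemicontinuous
              (fun p : (X × ℝ) × (X × ℝ) => d p.1.1 p.2.1) := husc.comp hc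
          exact continuous_coe_ennreal_ereal.comp_upperSemicontinuous husc2
            (fun a b h => EReal.coe_ennreal_le_coe_ennreal_iff.2 h)
        refine h1.add' h2 (fun p => ?_)
        exact EReal.continuousAt_add (Or.inl (EReal.coe_ne_top _)) (Or.inl (EReal.coe_ne_bot _))
      have hgcont : Continuous g := continuous_coe_real_ereal.comp (continuous_snd.snd)
      rw [← isOpen_compl_iff, isOpen_iff_mem_nhds]
      intro p hp
      simp only [Set.mem_compl_iff, Set.mem_setOf_eq, not_le] at hp
      obtain ⟨y, hy1, hy2⟩ := exists_between hp
      have e1 : ∀ᶠ q in nhds p, f q < y := hfusc p y hy1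
      have e2 : ∀ᶠ q in nhds p, y < g q :=
        hgcont.continuousAt.eventually_mem (isOpen_Ioi.mem_nhds hy2)
      filter_upwards [e1, e2] with q hq1 hq2
      simp only [Set.mem_compl_iff, Set.mem_setOf_eq, not_le]
      exact hq1.trans hq2
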